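/- Let Φ ∈ ℝ^{m×n} have unit-norm columns with μ(Φ) ≤ 1/f (f > 1). Let x be supported on S = {1,…,s}, b = Φx, and suppose |x₁| = max_{1≤i≤s} |x_i|. Then for any j ≠ 1, the projection of b onto span{φ₁, φⱼ} satisfies ‖Proj(b)‖ ≥ (1/(1−|φ₁ᵀφⱼ|²))·[(1 − 2/f − 1/f²)|x₁| − (2/f + 2/f²)·Σ_{k=2}^s |x_k|]. -/

import Mathlib

open RealInnerProductSpace

lemma stmt_13_aux (u c2 a T N : ℝ) (hu0 : 0 < u) (hu1 : u < 1) (hc20 : 0 ≤ c2)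
    (hc2 : c2 ≤ u ^ 2) (ha : 0 ≤ a) (hT : 0 ≤ T) (hN : 0 ≤ N)
    (hlow : a * (1 - c2) - 2 * u * T ≤ N) :
    1 / (1 - c2) * ((1 - 2 * u - u ^ 2) * a - (2 * u + 2 * u ^ 2) * T) ≤ N := by
  have hd2 : 0 < 1 - u ^ 2 := by nlinarith
  have hden : 0 < 1 - c2 := by nlinarith
  set E : ℝ := (1 - 2 * u - u ^ 2) * a - (2 * u + 2 * u ^ 2) * T with hE
  rcases le_or_gt E 0 with hE0 | hE0
  · have : 1 / (1 - c2) * E ≤ 0 :=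
      mul_nonpos_of_nonneg_of_nonpos (by positivity) hE0
    linarith
  · have hstep : 1 / (1 - c2) * E ≤ 1 / (1 - u ^ 2) * E := by
      apply mul_le_mul_of_nonneg_right _ (le_of_lt hE0)
      exact one_div_le_one_div_of_le hd2 (by linarith)
    have hstep2 : 1 / (1 - u ^ 2) * E ≤ a * (1 - u ^ 2) - 2 * u * T := by
      rw [div_mul_eq_mul_div, div_le_iff₀ hd2, hE]
      have h1 : 0 ≤ 2 * u - u ^ 2 + u ^ 4 := by nlinarith
      have h2 : 0 ≤ a * (2 * u - u ^ 2 + u ^ 4) := mul_nonneg ha h1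
      have h3 : 0 ≤ T * (2 * u ^ 2 + 2 * u ^ 3) := by positivity
      nlinarith [h2, h3]
    have hmono : a * (1 - u ^ 2) ≤ a * (1 - c2) :=
      mul_le_mul_of_nonneg_left (by linarith) ha
    linarith

theorem stmt_13 {m n : ℕ} (φ : Fin n → EuclideanSpace ℝ (Fin m))
    (hnorm : ∀ i, ‖φ i‖ = 1) (f : ℝ) (hf : 1 < f)
    (hcoh : ∀ i j, i ≠ j → |⟪φ i, φ j⟫| ≤ 1 / f)
    (S : Finset (Fin n)) (x : Fin n → ℝ) (hsupp : ∀ k, k ∉ S → x k = 0)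
    (b : EuclideanSpace ℝ (Fin m)) (hb : b = ∑ k ∈ S, x k • φ k)
    (i₀ : Fin n) (hi₀ : i₀ ∈ S) (hmax : ∀ k ∈ S, |x k| ≤ |x i₀|)
    (j : Fin n) (hj : j ≠ i₀) :
    (1 / (1 - ⟪φ i₀, φ j⟫ ^ 2)) *
        ((1 - 2 / f - 1 / f ^ 2) * |x i₀| -
          (2 / f + 2 / f ^ 2) * ∑ k ∈ S.erase i₀, |x k|)
      ≤ ‖(Submodule.orthogonalProjectionOnto
          (Submodule.span ℝ ({φ i₀, φ j} : Set (EuclideanSpace ℝ (Fin m)))) b :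
          EuclideanSpace ℝ (Fin m))‖ := by
  have hf0 : (0:ℝ) < f := lt_trans one_pos hf
  set c : ℝ := ⟪φ i₀, φ j⟫ with hcdef
  have hij : i₀ ≠ j := hj.symm
  have hc : |c| ≤ 1 / f := hcoh i₀ j hij
  set u : ℝ := 1 / f with hudef
  have hu0 : 0 < u := by positivity
  have hu1 : u < 1 := by rw [hudef]; rw [div_lt_one hf0]; exact hf
  have hc2 : c ^ 2 ≤ u ^ 2 := by
    rw [← sq_abs]
    exact pow_le_pow_left₀ (abs_nonneg c) hc 2
  have hden : 0 < 1 - c ^ 2 := by nlinarith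
  set K := Submodule.span ℝ ({φ i₀, φ j} : Set (EuclideanSpace ℝ (Fin m))) with hK
  set v : EuclideanSpace ℝ (Fin m) := φ i₀ - c • φ j with hv
  have hvK : v ∈ K := by
    apply Submodule.sub_mem
    · exact Submodule.subset_span (Set.mem_insert _ _)
    · exact Submodule.smul_mem _ _ (Submodule.subset_span (Set.mem_insert_of_mem _ rfl))
  have hself : ∀ i : Fin n, ⟪φ i, φ i⟫ = 1 := by
    intro i
    rw [real_inner_self_eq_norm_sq, hnorm i, one_pow]
  have hcj : ⟪φ j, φ i₀⟫ = c := by rw [hcdef]; exact real_inner_comm _ _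
  have hnormv2 : ‖v‖ ^ 2 = 1 - c ^ 2 := by
    rw [hv, ← real_inner_self_eq_norm_sq, inner_sub_sub_self]
    simp only [real_inner_smul_left, real_inner_smul_right, hself, hcj, hcdef]
    ring
  have hvle1 : ‖v‖ ≤ 1 := by
    nlinarith [norm_nonneg v, sq_nonneg c]
  set P : EuclideanSpace ℝ (Fin m) := (Submodule.orthogonalProjectionOnto K b : EuclideanSpace ℝ (Fin m))
    with hP
  have hproj : ⟪v, b⟫ = ⟪v, P⟫ := by
    rw [hP]
    exact (Submodule.inner_orthogonalProjectionOnto_eq_of_mem_left (K := K) ⟨v, hvK⟩ b).symm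
  have hCS : |⟪v, b⟫| ≤ ‖P‖ := by
    rw [hproj]
    calc |⟪v, P⟫| ≤ ‖v‖ * ‖P‖ := abs_real_inner_le_norm v P
      _ ≤ 1 * ‖P‖ := by
          exact mul_le_mul_of_nonneg_right hvle1 (norm_nonneg P)
      _ = ‖P‖ := one_mul _
  -- compute the inner product
  set T : ℝ := ∑ k ∈ S.erase i₀, |x k| with hT
  have hT0 : 0 ≤ T := Finset.sum_nonneg fun k _ => abs_nonneg _
  have hib : ⟪v, b⟫ = x i₀ * (1 - c ^ 2)
      + ∑ k ∈ S.erase i₀, x k * (⟪φ i₀, φ k⟫ - c * ⟪φ j, φ k⟫) := by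
    rw [hb, inner_sum]
    have hterm : ∀ k, ⟪v, x k • φ k⟫ = x k * (⟪φ i₀, φ k⟫ - c * ⟪φ j, φ k⟫) := by
      intro k
      rw [hv, real_inner_smul_right, inner_sub_left, real_inner_smul_left]
    simp only [hterm]
    rw [← Finset.add_sum_erase _ (fun k => x k * (⟪φ i₀, φ k⟫ - c * ⟪φ j, φ k⟫)) hi₀]
    have hhead : x i₀ * (⟪φ i₀, φ i₀⟫ - c * ⟪φ j, φ i₀⟫) = x i₀ * (1 - c ^ 2) := by
      rw [hself, hcj]; ring
    rw [hhead]
  have hRb : |∑ k ∈ S.erase i₀, x k * (⟪φ i₀, φ k⟫ - c * ⟪φ j, φ k⟫)| ≤ 2 * u * T := by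
    calc |∑ k ∈ S.erase i₀, x k * (⟪φ i₀, φ k⟫ - c * ⟪φ j, φ k⟫)|
        ≤ ∑ k ∈ S.erase i₀, |x k * (⟪φ i₀, φ k⟫ - c * ⟪φ j, φ k⟫)| :=
          Finset.abs_sum_le_sum_abs _ _
      _ ≤ ∑ k ∈ S.erase i₀, |x k| * (2 * u) := by
          apply Finset.sum_le_sum
          intro k hk
          have hki : i₀ ≠ k := (Finset.ne_of_mem_erase hk).symm
          have h1 : |⟪φ i₀, φ k⟫| ≤ u := hcoh i₀ k hki
          have h2 : |⟪φ j, φ k⟫| ≤ 1 := by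
            calc |⟪φ j, φ k⟫| ≤ ‖φ j‖ * ‖φ k‖ := abs_real_inner_le_norm _ _
              _ = 1 := by rw [hnorm, hnorm, one_mul]
          rw [abs_mul]
          apply mul_le_mul_of_nonneg_left _ (abs_nonneg _)
          calc |⟪φ i₀, φ k⟫ - c * ⟪φ j, φ k⟫|
              ≤ |⟪φ i₀, φ k⟫| + |c * ⟪φ j, φ k⟫| := abs_sub _ _
            _ ≤ u + u * 1 := by
                apply add_le_add h1
                rw [abs_mul]
                exact mul_le_mul hc h2 (abs_nonneg _) (le_of_lt hu0)
            _ = 2 * u := by ring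
      _ = 2 * u * T := by rw [hT, ← Finset.sum_mul]; ring
  have hlow : |x i₀| * (1 - c ^ 2) - 2 * u * T ≤ ‖P‖ := by
    have h1 : |x i₀ * (1 - c ^ 2)| = |x i₀| * (1 - c ^ 2) := by
      rw [abs_mul, abs_of_pos hden]
    have h2 : |x i₀| * (1 - c ^ 2) - 2 * u * T ≤ |⟪v, b⟫| := by
      rw [hib]
      have := abs_add_le (x i₀ * (1 - c ^ 2) + ∑ k ∈ S.erase i₀, x k * (⟪φ i₀, φ k⟫ - c * ⟪φ j, φ k⟫))
        (-(∑ k ∈ S.erase i₀, x k * (⟪φ i₀, φ k⟫ - c * ⟪φ j, φ k⟫)))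
      simp only [add_neg_cancel_right, abs_neg] at this
      linarith [h1 ▸ this, hRb]
    linarith [hCS]
  -- final arithmetic
  have hrw1 : (2:ℝ) / f = 2 * u := by rw [hudef]; ring
  have hrw2 : (1:ℝ) / f ^ 2 = u ^ 2 := by rw [hudef]; field_simp
  have hrw3 : (2:ℝ) / f ^ 2 = 2 * u ^ 2 := by rw [hudef]; field_simp
  rw [hrw1, hrw2, hrw3]
  exact stmt_13_aux u (c ^ 2) |x i₀| T _ hu0 hu1 (sq_nonneg c) hc2 (abs_nonneg _)
    hT0 (norm_nonneg P) hlow
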